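/- With all nine edge lengths equal to 1 (a = b = c = d = e = f = α = β = γ = 1), the pinned configuration space of (K_{3,3},l) — the space of maps p : {v₁,…,v₆} → ℝ² with p(v₄)=(0,0), p(v₁)=(1,0) and all nine distance constraints dist(p₁,p₆)=dist(p₁,p₂)=dist(p₂,p₃)=dist(p₃,p₄)=dist(p₄,p₅)=dist(p₅,p₆)=dist(p₁,p₄)=dist(p₃,p₆)=dist(p₂,p₅)=1 — is nonempty and connected. -/

import Mathlib

/-- The pinned configuration space `C_{v₄,v₁}(K_{3,3}, l)`: realizations
`p : {v₁,…,v₆} → ℝ²` (vertex `vᵢ` is index `i-1`) of the weighted graph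
`K_{3,3}` with edge lengths `a, b, c, d, e, f, α, β, γ` on the edges
`v₁v₆, v₁v₂, v₂v₃, v₃v₄, v₄v₅, v₅v₆, v₁v₄, v₃v₆, v₂v₅` respectively,
pinned by `p(v₄) = (0,0)` and `p(v₁) = (α,0)`. -/
def K33PinnedConfig (a b c d e f α β γ : ℝ) :
    Set (Fin 6 → EuclideanSpace ℝ (Fin 2)) :=
  {p | p 3 = 0 ∧ p 0 = ![α, 0] ∧
    dist (p 0) (p 5) = a ∧ dist (p 0) (p 1) = b ∧ dist (p 1) (p 2) = c ∧
    dist (p 2) (p 3) = d ∧ dist (p 3) (p 4) = e ∧ dist (p 4) (p 5) = f ∧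
    dist (p 0) (p 3) = α ∧ dist (p 2) (p 5) = β ∧ dist (p 1) (p 4) = γ}

namespace K33Aux

abbrev E2 : Type := EuclideanSpace ℝ (Fin 2)

noncomputable def e1 : E2 := WithLp.toLp 2 ![1, 0]

/-- The equilateral pinned configuration space. -/
def S : Set (Fin 6 → E2) := K33PinnedConfig 1 1 1 1 1 1 1 1 1

lemma mem_S_iff {p : Fin 6 → E2} :
    p ∈ S ↔ p 3 = 0 ∧ p 0 = e1 ∧
      dist (p 0) (p 5) = 1 ∧ dist (p 0) (p 1) = 1 ∧ dist (p 1) (p 2) = 1 ∧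
      dist (p 2) (p 3) = 1 ∧ dist (p 3) (p 4) = 1 ∧ dist (p 4) (p 5) = 1 ∧
      dist (p 0) (p 3) = 1 ∧ dist (p 2) (p 5) = 1 ∧ dist (p 1) (p 4) = 1 := by
  have h : (p 0).ofLp = ![1, 0] ↔ p 0 = e1 := by
    constructor
    · intro h; rw [e1, ← h]
    · intro h; rw [h, e1]
  simp only [S, K33PinnedConfig, Set.mem_setOf_eq, h]

lemma dist_iff (x y : E2) : dist x y = 1 ↔ (x 0 - y 0)^2 + (x 1 - y 1)^2 = 1 := by
  rw [EuclideanSpace.dist_eq, Fin.sum_univ_two, Real.sqrt_eq_one]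
  simp [Real.dist_eq, sq_abs]

lemma ext2 {x y : E2} (h0 : x 0 = y 0) (h1 : x 1 = y 1) : x = y := by
  ext i; fin_cases i <;> assumption

/-- Two distinct unit circles, one centered at a point `a` of the unit circle
around the origin, the other centered at `e1`, intersect only in `0` and `a + e1`. -/
lemma circle2 {a z : E2} (ha : dist a 0 = 1) (hne : a ≠ e1)
    (h1 : dist z a = 1) (h2 : dist z e1 = 1) : z = 0 ∨ z = a + e1 := by
  rw [dist_iff] at ha h1 h2
  simp only [e1, Matrix.cons_val_zero, Matrix.cons_val_one, Matrix.head_cons,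
    show (0:E2) 0 = 0 from rfl, show (0:E2) 1 = 0 from rfl, sub_zero] at ha h1 h2
  have hne' : ¬ (a 0 = 1 ∧ a 1 = 0) := by
    rintro ⟨u, v⟩
    exact hne (ext2 (by simp [e1, u]) (by simp [e1, v]))
  have ha1 : a 0 ≠ 1 := fun h => hne' ⟨h, by nlinarith⟩
  have hc : 0 < 1 - a 0 := by
    rcases lt_or_eq_of_le (show a 0 ≤ 1 by
      nlinarith [sq_nonneg (a 0 - 1), sq_nonneg (a 1)]) with h | h
    · linarith
    · exact absurd h ha1
  have key : z 0 * (1 - a 0) = z 1 * a 1 := by nlinarith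
  have hP : 2 * (1 - a 0) * (z 1 ^ 2 - z 1 * a 1) = 0 := by
    nlinarith [sq_nonneg (z 0 * (1 - a 0) - z 1 * a 1)]
  have hz1 : z 1 * (z 1 - a 1) = 0 := by
    rcases mul_eq_zero.mp hP with h | h
    · linarith
    · linarith [h]
  rcases mul_eq_zero.mp hz1 with h | h
  · left
    have hz0 : z 0 = 0 := by
      have hm : z 0 * (1 - a 0) = 0 := by rw [key, h]; ring
      rcases mul_eq_zero.mp hm with h' | h'
      · exact h'
      · linarith
    exact ext2 (by simpa using hz0) (by simpa using h)
  · right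
    have h1' : z 1 = a 1 := by linarith
    have hz0 : z 0 = a 0 + 1 := by
      have e : z 0 * (1 - a 0) = (a 0 + 1) * (1 - a 0) := by rw [key, h1']; nlinarith
      exact mul_right_cancel₀ (ne_of_gt hc) e
    refine ext2 ?_ ?_
    · simpa [e1] using hz0
    · simpa [e1] using h1'

/-- Shifted version: circles around a point `b` of the unit circle around `e1`
and around `0` intersect only in `e1` and `b - e1`. -/
lemma circle2' {b z : E2} (hb : dist b e1 = 1) (hbne : b ≠ 0)
    (h1 : dist z b = 1) (h2 : dist z 0 = 1) : z = e1 ∨ z = b - e1 := by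
  have ha : dist (e1 - b) 0 = 1 := by
    rw [dist_zero_right, ← dist_eq_norm, dist_comm]; exact hb
  have hane : e1 - b ≠ e1 := by
    intro h
    apply hbne
    have h2 : e1 - b + b = e1 + 0 := by rw [sub_add_cancel, add_zero]
    rw [h] at h2
    exact (add_left_cancel h2)
  have hz1 : dist (e1 - z) (e1 - b) = 1 := by rw [dist_sub_left]; exact h1
  have hz2 : dist (e1 - z) e1 = 1 := by
    have h' : dist (e1 - z) (e1 - 0) = dist z 0 := dist_sub_left e1 z 0
    rw [sub_zero] at h'
    rw [h', h2]
  rcases circle2 ha hane hz1 hz2 with h | h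
  · left
    exact (sub_eq_zero.mp h).symm
  · right
    have hzz : z = e1 - (e1 - z) := (sub_sub_cancel e1 z).symm
    rw [h] at hzz
    rw [hzz]
    abel

noncomputable def path6 {x0 x1 x2 x3 x4 x5 y0 y1 y2 y3 y4 y5 : E2}
    (g0 : Path x0 y0) (g1 : Path x1 y1) (g2 : Path x2 y2)
    (g3 : Path x3 y3) (g4 : Path x4 y4) (g5 : Path x5 y5) :
    Path (![x0,x1,x2,x3,x4,x5] : Fin 6 → E2) ![y0,y1,y2,y3,y4,y5] where
  toFun t := ![g0 t, g1 t, g2 t, g3 t, g4 t, g5 t]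
  continuous_toFun := by
    apply continuous_pi
    intro i
    fin_cases i
    exacts [g0.continuous, g1.continuous, g2.continuous, g3.continuous,
      g4.continuous, g5.continuous]
  source' := by funext i; fin_cases i <;> simp
  target' := by funext i; fin_cases i <;> simp

lemma sphere_conn (c : E2) : IsPathConnected (Metric.sphere c (1:ℝ)) := by
  apply isPathConnected_sphere ?_ _ zero_le_one
  have h : Module.finrank ℝ E2 = 2 := finrank_euclideanSpace_fin
  have h2 := Module.finrank_eq_rank ℝ E2
  rw [h] at h2
  rw [← h2]
  norm_num

lemma d10 : dist e1 (0:E2) = 1 := by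
  rw [dist_iff]
  simp [e1, show (0:E2) 0 = 0 from rfl, show (0:E2) 1 = 0 from rfl]

lemma d01 : dist (0:E2) e1 = 1 := by rw [dist_comm]; exact d10

/-- value of an odd (A-side) vertex: either `e1` or the moving point. -/
noncomputable def Av (b : Bool) (y : E2) : E2 := if b then y else e1
/-- value of an even (B-side) vertex: either `0` or the moving point plus `e1`. -/
noncomputable def Bv (b : Bool) (y : E2) : E2 := if b then y + e1 else 0

lemma dAB (b b' : Bool) {z : E2} (hz : dist z 0 = 1) : dist (Av b z) (Bv b' z) = 1 := by
  cases b <;> cases b' <;> simp only [Av, Bv, if_true, if_false, Bool.false_eq_true]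
  · exact d10
  · have h := dist_add_right (0:E2) z e1
    rw [zero_add] at h
    rw [h, dist_comm]
    exact hz
  · exact hz
  · have h := dist_add_left z (0:E2) e1
    rw [add_zero] at h
    rw [h]
    exact d01

lemma dBA (b b' : Bool) {z : E2} (hz : dist z 0 = 1) : dist (Bv b z) (Av b' z) = 1 := by
  rw [dist_comm]; exact dAB b' b hz

lemma dBe1 (b : Bool) : dist (Bv b e1) e1 = 1 := by
  cases b <;> simp only [Bv, if_true, if_false, Bool.false_eq_true]
  · exact d01
  · have h := dist_add_right e1 (0:E2) e1
    rw [zero_add] at h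
    rw [h]
    exact d10

noncomputable def pA (b : Bool) {y : E2} (g : Path y e1) : Path (Av b y) e1 :=
  match b with
  | true => g
  | false => Path.refl e1

noncomputable def pB (b : Bool) {y : E2} (g : Path y e1) : Path (Bv b y) (Bv b e1) :=
  match b with
  | true => g.map (continuous_add_right e1)
  | false => Path.refl 0

lemma pA_apply (b : Bool) {y : E2} (g : Path y e1) (t : unitInterval) :
    pA b g t = Av b (g t) := by
  cases b <;> rfl

lemma pB_apply (b : Bool) {y : E2} (g : Path y e1) (t : unitInterval) :
    pB b g t = Bv b (g t) := by
  cases b <;> rfl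

/-- The base configuration. -/
noncomputable def base : Fin 6 → E2 := ![e1, 0, e1, 0, e1, 0]

lemma hbase : base ∈ S :=
  ⟨rfl, rfl, d10, d10, d01, d10, d01, d10, d10, d10, d01⟩

lemma cfg_mem {z : E2} (hz : dist z 0 = 1) (b1 b2 b4 b5 : Bool) :
    (![e1, Bv b1 z, Av b2 z, 0, Av b4 z, Bv b5 z] : Fin 6 → E2) ∈ S :=
  ⟨rfl, rfl, dAB false b5 hz, dAB false b1 hz, dBA b1 b2 hz, dAB b2 false hz,
    dBA false b4 hz, dAB b4 b5 hz, dAB false false hz, dAB b2 b5 hz, dBA b1 b4 hz⟩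

lemma joined_caseA {u v : E2} (hu : dist u e1 = 1) (hv : dist v e1 = 1) :
    JoinedIn S ![e1, u, e1, 0, e1, v] base := by
  obtain ⟨g1, hg1⟩ := (sphere_conn e1).joinedIn u (by simpa [dist_eq_norm] using hu) 0 (by simpa using d01)
  obtain ⟨g5, hg5⟩ := (sphere_conn e1).joinedIn v (by simpa [dist_eq_norm] using hv) 0 (by simpa using d01)
  refine ⟨path6 (Path.refl e1) g1 (Path.refl e1) (Path.refl 0) (Path.refl e1) g5, ?_⟩
  intro t
  have h1 : dist (g1 t) e1 = 1 := by simpa [dist_eq_norm] using hg1 t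
  have h5 : dist (g5 t) e1 = 1 := by simpa [dist_eq_norm] using hg5 t
  exact ⟨rfl, rfl, (dist_comm e1 (g5 t)).trans h5, (dist_comm e1 (g1 t)).trans h1, h1,
    d10, d01, (dist_comm e1 (g5 t)).trans h5, d10, (dist_comm e1 (g5 t)).trans h5, h1⟩

lemma joined_caseB {u v : E2} (hu : dist u 0 = 1) (hv : dist v 0 = 1) :
    JoinedIn S ![e1, 0, u, 0, v, 0] base := by
  obtain ⟨g2, hg2⟩ := (sphere_conn 0).joinedIn u (by simpa using hu) e1 (by simpa using d10)
  obtain ⟨g4, hg4⟩ := (sphere_conn 0).joinedIn v (by simpa using hv) e1 (by simpa using d10)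
  refine ⟨path6 (Path.refl e1) (Path.refl 0) g2 (Path.refl 0) g4 (Path.refl 0), ?_⟩
  intro t
  have h2 : dist (g2 t) 0 = 1 := by simpa using hg2 t
  have h4 : dist (g4 t) 0 = 1 := by simpa using hg4 t
  exact ⟨rfl, rfl, d10, d10, (dist_comm (0:E2) (g2 t)).trans h2,
    h2, (dist_comm (0:E2) (g4 t)).trans h4, h4, d10, h2,
    (dist_comm (0:E2) (g4 t)).trans h4⟩

lemma joined_caseC {y : E2} (hy : dist y 0 = 1) (b1 b2 b4 b5 : Bool) :
    JoinedIn S ![e1, Bv b1 y, Av b2 y, 0, Av b4 y, Bv b5 y]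
      ![e1, Bv b1 e1, e1, 0, e1, Bv b5 e1] := by
  obtain ⟨g, hg⟩ := (sphere_conn 0).joinedIn y (by simpa using hy) e1 (by simpa using d10)
  refine ⟨(path6 (Path.refl e1) (pB b1 g) (pA b2 g) (Path.refl 0) (pA b4 g) (pB b5 g)), ?_⟩
  intro t
  have hz : dist (g t) 0 = 1 := by simpa using hg t
  have hform : (path6 (Path.refl e1) (pB b1 g) (pA b2 g) (Path.refl 0) (pA b4 g) (pB b5 g)) t
      = ![e1, Bv b1 (g t), Av b2 (g t), 0, Av b4 (g t), Bv b5 (g t)] := by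
    funext i
    fin_cases i
    exacts [rfl, pB_apply b1 g t, pA_apply b2 g t, rfl, pA_apply b4 g t, pB_apply b5 g t]
  rw [hform]
  exact cfg_mem hz b1 b2 b4 b5

lemma classify_core {q1 q2 q4 q5 : E2}
    (d01 : dist e1 q1 = 1) (d12 : dist q1 q2 = 1) (d14 : dist q1 q4 = 1)
    (d05 : dist e1 q5 = 1) (d25 : dist q2 q5 = 1) (d45 : dist q4 q5 = 1)
    (d20 : dist q2 0 = 1) (d40 : dist q4 0 = 1)
    (hne : q2 ≠ e1 ∨ q4 ≠ e1) (hnz : q1 ≠ 0 ∨ q5 ≠ 0) :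
    ∃ y, dist y 0 = 1 ∧ (q1 = 0 ∨ q1 = y + e1) ∧ (q2 = e1 ∨ q2 = y) ∧
      (q4 = e1 ∨ q4 = y) ∧ (q5 = 0 ∨ q5 = y + e1) := by
  have main : ∀ a : E2, dist a 0 = 1 → a ≠ e1 → dist q1 a = 1 → dist q5 a = 1 →
      (q1 = 0 ∨ q1 = a + e1) → (q5 = 0 ∨ q5 = a + e1) →
      ∃ y, dist y 0 = 1 ∧ (q1 = 0 ∨ q1 = y + e1) ∧ (q2 = e1 ∨ q2 = y) ∧
        (q4 = e1 ∨ q4 = y) ∧ (q5 = 0 ∨ q5 = y + e1) := by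
    intro a ha0 hane _ _ hq1 hq5
    rcases hnz with hb | hb
    · have hq1e : q1 = a + e1 := hq1.resolve_left hb
      have hb1 : dist q1 e1 = 1 := by rw [dist_comm]; exact d01
      have hq2' : q2 = e1 ∨ q2 = q1 - e1 :=
        circle2' hb1 hb (by rw [dist_comm]; exact d12) d20
      have hq4' : q4 = e1 ∨ q4 = q1 - e1 :=
        circle2' hb1 hb (by rw [dist_comm]; exact d14) d40
      have hsub : q1 - e1 = a := by rw [hq1e]; exact add_sub_cancel_right a e1
      rw [hsub] at hq2' hq4'
      exact ⟨a, ha0, hq1, hq2', hq4', hq5⟩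
    · have hq5e : q5 = a + e1 := hq5.resolve_left hb
      have hb5 : dist q5 e1 = 1 := by rw [dist_comm]; exact d05
      have hq2' : q2 = e1 ∨ q2 = q5 - e1 :=
        circle2' hb5 hb d25 d20
      have hq4' : q4 = e1 ∨ q4 = q5 - e1 :=
        circle2' hb5 hb d45 d40
      have hsub : q5 - e1 = a := by rw [hq5e]; exact add_sub_cancel_right a e1
      rw [hsub] at hq2' hq4'
      exact ⟨a, ha0, hq1, hq2', hq4', hq5⟩
  rcases hne with h | h
  · have hq1 : q1 = 0 ∨ q1 = q2 + e1 :=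
      circle2 d20 h d12 (by rw [dist_comm]; exact d01)
    have hq5 : q5 = 0 ∨ q5 = q2 + e1 :=
      circle2 d20 h (by rw [dist_comm]; exact d25) (by rw [dist_comm]; exact d05)
    exact main q2 d20 h d12 ((dist_comm q5 q2).trans d25) hq1 hq5
  · have hq1 : q1 = 0 ∨ q1 = q4 + e1 :=
      circle2 d40 h d14 (by rw [dist_comm]; exact d01)
    have hq5 : q5 = 0 ∨ q5 = q4 + e1 :=
      circle2 d40 h (by rw [dist_comm]; exact d45) (by rw [dist_comm]; exact d05)
    exact main q4 d40 h d14 ((dist_comm q5 q4).trans d45) hq1 hq5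

lemma joined_to_base {p : Fin 6 → E2} (hp : p ∈ S) : JoinedIn S p base := by
  obtain ⟨h3, h0, d05, d01', d12, d23, d34, d45, d03, d25, d14⟩ := mem_S_iff.mp hp
  rw [h0] at d05 d01'
  rw [h3] at d23 d34
  by_cases hA : p 2 = e1 ∧ p 4 = e1
  · have hform : p = ![e1, p 1, e1, 0, e1, p 5] := by
      funext i
      fin_cases i
      exacts [h0, rfl, hA.1, h3, hA.2, rfl]
    rw [hform]
    exact joined_caseA ((dist_comm (p 1) e1).trans d01')
      ((dist_comm (p 5) e1).trans d05)
  · by_cases hB : p 1 = 0 ∧ p 5 = 0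
    · have hform : p = ![e1, 0, p 2, 0, p 4, 0] := by
        funext i
        fin_cases i
        exacts [h0, hB.1, rfl, h3, rfl, hB.2]
      rw [hform]
      exact joined_caseB d23 ((dist_comm (p 4) 0).trans d34)
    · obtain ⟨y, hy, c1, c2, c4, c5⟩ :=
        classify_core d01' d12 d14 d05 d25 d45 d23
          ((dist_comm (p 4) 0).trans d34)
          (not_and_or.mp hA) (not_and_or.mp hB)
      have step : ∀ (b1 b2 b4 b5 : Bool),
          p = ![e1, Bv b1 y, Av b2 y, 0, Av b4 y, Bv b5 y] → JoinedIn S p base := by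
        intro b1 b2 b4 b5 hform
        rw [hform]
        exact (joined_caseC hy b1 b2 b4 b5).trans (joined_caseA (dBe1 b1) (dBe1 b5))
      rcases c1 with h1 | h1 <;> rcases c2 with h2 | h2 <;>
        rcases c4 with h4 | h4 <;> rcases c5 with h5 | h5
      · exact step false false false false (by funext i; fin_cases i; exacts [h0, h1, h2, h3, h4, h5])
      · exact step false false false true (by funext i; fin_cases i; exacts [h0, h1, h2, h3, h4, h5])
      · exact step false false true false (by funext i; fin_cases i; exacts [h0, h1, h2, h3, h4, h5])
      · exact step false false true true (by funext i; fin_cases i; exacts [h0, h1, h2, h3, h4, h5])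
      · exact step false true false false (by funext i; fin_cases i; exacts [h0, h1, h2, h3, h4, h5])
      · exact step false true false true (by funext i; fin_cases i; exacts [h0, h1, h2, h3, h4, h5])
      · exact step false true true false (by funext i; fin_cases i; exacts [h0, h1, h2, h3, h4, h5])
      · exact step false true true true (by funext i; fin_cases i; exacts [h0, h1, h2, h3, h4, h5])
      · exact step true false false false (by funext i; fin_cases i; exacts [h0, h1, h2, h3, h4, h5])
      · exact step true false false true (by funext i; fin_cases i; exacts [h0, h1, h2, h3, h4, h5])
      · exact step true false true false (by funext i; fin_cases i; exacts [h0, h1, h2, h3, h4, h5])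
      · exact step true false true true (by funext i; fin_cases i; exacts [h0, h1, h2, h3, h4, h5])
      · exact step true true false false (by funext i; fin_cases i; exacts [h0, h1, h2, h3, h4, h5])
      · exact step true true false true (by funext i; fin_cases i; exacts [h0, h1, h2, h3, h4, h5])
      · exact step true true true false (by funext i; fin_cases i; exacts [h0, h1, h2, h3, h4, h5])
      · exact step true true true true (by funext i; fin_cases i; exacts [h0, h1, h2, h3, h4, h5])

lemma S_pathConnected : IsPathConnected S :=
  ⟨base, hbase, fun _ hy => (joined_to_base hy).symm⟩

end K33Aux

/-- **Example: the equilateral `(K_{3,3}, l)` has connected moduli space.**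
With all nine edge lengths equal to `1`, the pinned configuration space
`C_{v₄,v₁}(K_{3,3}, l)` is nonempty and connected. -/
theorem K33_pinned_equilateral_connected :
    (K33PinnedConfig 1 1 1 1 1 1 1 1 1).Nonempty ∧
    IsConnected (K33PinnedConfig 1 1 1 1 1 1 1 1 1) :=
  ⟨⟨K33Aux.base, K33Aux.hbase⟩, K33Aux.S_pathConnected.isConnected⟩
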